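/- Let Λ ⊂ ℂ be a lattice, let ℓ = 2n+1 be odd (n ≥ 0), and let p₁, …, p_ℓ ∈ ℂ be pairwise distinct modulo Λ. Set ζ_{ij} = ζ(p_i − p_j) and ℘_i = Σ_{j≠i} ℘(p_i − p_j). Define the polynomials f₀(x) = Σ_{i=1}^ℓ x_i and, for 1 ≤ i ≤ ℓ, f_i(x) = x_i² − x₀ Σ_{j≠i} ζ_{ij} x_j − x₀ − (3/4)℘_i x₀², in the variables x = (x₀, x₁, …, x_ℓ) ∈ ℂ^{ℓ+1}. Then the origin is an isolated point of the common zero set: there exists ε > 0 such that the only x ∈ ℂ^{ℓ+1} with |x_i| < ε for all i = 0, …, ℓ and f₀(x) = f₁(x) = ⋯ = f_ℓ(x) = 0 is x = 0. -/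

import Mathlib

noncomputable section

/-- The lattice point `m ω₁ + n ω₂` attached to an integer pair. -/
def latPt (ω₁ ω₂ : ℂ) (p : ℤ × ℤ) : ℂ := p.1 * ω₁ + p.2 * ω₂

/-- Membership in the lattice `Λ = ℤω₁ + ℤω₂`. -/
def IsLatticePt (ω₁ ω₂ z : ℂ) : Prop := ∃ m n : ℤ, z = m * ω₁ + n * ω₂

/-- The Weierstrass `℘`-function of the lattice `ℤω₁ + ℤω₂`. -/
def wp (ω₁ ω₂ : ℂ) (z : ℂ) : ℂ :=
  1 / z ^ 2 + ∑' p : {p : ℤ × ℤ // p ≠ 0},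
    (1 / (z - latPt ω₁ ω₂ p.1) ^ 2 - 1 / (latPt ω₁ ω₂ p.1) ^ 2)

/-- The Weierstrass `ζ`-function of the lattice `ℤω₁ + ℤω₂`. -/
def wzeta (ω₁ ω₂ : ℂ) (z : ℂ) : ℂ :=
  1 / z + ∑' p : {p : ℤ × ℤ // p ≠ 0},
    (1 / (z - latPt ω₁ ω₂ p.1) + 1 / latPt ω₁ ω₂ p.1 + z / (latPt ω₁ ω₂ p.1) ^ 2)

/-- The derivative `℘'` of the Weierstrass `℘`-function. -/
def wpDeriv (ω₁ ω₂ : ℂ) : ℂ → ℂ := deriv (wp ω₁ ω₂)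

/-- the origin is an isolated point of the common zero set of the
dehomogenized log-free system `f₀(x) = Σ_{i=1}^ℓ x_i`,
`f_i(x) = x_i² − x₀ Σ_{j≠i} ζ_{ij} x_j − x₀ − (3/4)℘_i x₀²` (`ℓ = 2n+1` odd). -/
theorem stmt1 (ω₁ ω₂ : ℂ)
    (hindep : ∀ a b : ℝ, (a : ℂ) * ω₁ + (b : ℂ) * ω₂ = 0 → a = 0 ∧ b = 0)
    (n : ℕ) (p : Fin (2 * n + 1) → ℂ)
    (hdist : ∀ i j, i ≠ j → ¬ IsLatticePt ω₁ ω₂ (p i - p j)) :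
    ∃ ε : ℝ, 0 < ε ∧
      ∀ (x₀ : ℂ) (x : Fin (2 * n + 1) → ℂ),
        ‖x₀‖ < ε → (∀ i, ‖x i‖ < ε) →
        (∑ i, x i) = 0 →
        (∀ i, (x i) ^ 2 - x₀ * (∑ j ∈ Finset.univ.erase i, wzeta ω₁ ω₂ (p i - p j) * x j)
            - x₀ - (3 / 4) * (∑ j ∈ Finset.univ.erase i, wp ω₁ ω₂ (p i - p j)) * x₀ ^ 2 = 0) →
        x₀ = 0 ∧ x = 0 := by
  classical
  set Ki : Fin (2 * n + 1) → ℝ := fun i =>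
    (∑ j ∈ Finset.univ.erase i, ‖wzeta ω₁ ω₂ (p i - p j)‖)
      + ‖(3 / 4 : ℂ) * (∑ j ∈ Finset.univ.erase i, wp ω₁ ω₂ (p i - p j))‖ with hKidef
  have hKi0 : ∀ i, 0 ≤ Ki i := fun i =>
    add_nonneg (Finset.sum_nonneg fun _ _ => norm_nonneg _) (norm_nonneg _)
  set K : ℝ := 1 + ∑ i, Ki i with hKdef
  have hK1 : 1 ≤ K := le_add_of_nonneg_right (Finset.sum_nonneg fun i _ => hKi0 i)
  have hK0 : (0 : ℝ) < K := lt_of_lt_of_le one_pos hK1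
  refine ⟨1 / K, by positivity, ?_⟩
  intro x₀ x hx₀ hx hsum heq
  -- rewrite the equations as x_i² = x₀ (1 + d i)
  set d : Fin (2 * n + 1) → ℂ := fun i =>
    (∑ j ∈ Finset.univ.erase i, wzeta ω₁ ω₂ (p i - p j) * x j)
      + (3 / 4 : ℂ) * (∑ j ∈ Finset.univ.erase i, wp ω₁ ω₂ (p i - p j)) * x₀ with hddef
  have heq' : ∀ i, (x i) ^ 2 = x₀ * (1 + d i) := by
    intro i
    have := heq i
    simp only [hddef]
    ring_nf
    ring_nf at this
    linear_combination this
  have hd : ∀ i, ‖d i‖ ≤ Ki i / K := by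
    intro i
    have h1 : ‖∑ j ∈ Finset.univ.erase i, wzeta ω₁ ω₂ (p i - p j) * x j‖
        ≤ (∑ j ∈ Finset.univ.erase i, ‖wzeta ω₁ ω₂ (p i - p j)‖) * (1 / K) := by
      calc ‖∑ j ∈ Finset.univ.erase i, wzeta ω₁ ω₂ (p i - p j) * x j‖
          ≤ ∑ j ∈ Finset.univ.erase i, ‖wzeta ω₁ ω₂ (p i - p j) * x j‖ :=
            norm_sum_le _ _
        _ ≤ ∑ j ∈ Finset.univ.erase i, ‖wzeta ω₁ ω₂ (p i - p j)‖ * (1 / K) := by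
            refine Finset.sum_le_sum fun j _ => ?_
            rw [norm_mul]
            exact mul_le_mul_of_nonneg_left (le_of_lt (hx j)) (norm_nonneg _)
        _ = (∑ j ∈ Finset.univ.erase i, ‖wzeta ω₁ ω₂ (p i - p j)‖) * (1 / K) := by
            rw [Finset.sum_mul]
    have h2 : ‖(3 / 4 : ℂ) * (∑ j ∈ Finset.univ.erase i, wp ω₁ ω₂ (p i - p j)) * x₀‖
        ≤ ‖(3 / 4 : ℂ) * (∑ j ∈ Finset.univ.erase i, wp ω₁ ω₂ (p i - p j))‖ * (1 / K) := by
      rw [norm_mul]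
      exact mul_le_mul_of_nonneg_left (le_of_lt hx₀) (norm_nonneg _)
    calc ‖d i‖ ≤ _ + _ := norm_add_le _ _
      _ ≤ (∑ j ∈ Finset.univ.erase i, ‖wzeta ω₁ ω₂ (p i - p j)‖) * (1 / K)
          + ‖(3 / 4 : ℂ) * (∑ j ∈ Finset.univ.erase i, wp ω₁ ω₂ (p i - p j))‖ * (1 / K) :=
        add_le_add h1 h2
      _ = Ki i / K := by rw [hKidef]; ring
  have hx0 : x₀ = 0 := by
    by_contra h0
    obtain ⟨r, hr⟩ : ∃ r : ℂ, r ^ 2 = x₀ := by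
      refine ⟨Complex.exp (Complex.log x₀ / 2), ?_⟩
      rw [← Complex.exp_nat_mul]
      push_cast
      rw [mul_div_cancel₀ _ (two_ne_zero), Complex.exp_log h0]
    have hr0 : r ≠ 0 := fun h => h0 (by rw [← hr, h]; ring)
    set u : Fin (2 * n + 1) → ℂ := fun i => x i / r with hudef
    have hu2 : ∀ i, u i ^ 2 - 1 = d i := by
      intro i
      have : u i ^ 2 = (1 + d i) := by
        have hx2 := heq' i
        simp only [hudef]; field_simp
        rw [hx2, hr]
      rw [this]; ring
    set t : Fin (2 * n + 1) → ℤ := fun i =>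
      if ‖u i - 1‖ ≤ ‖u i + 1‖ then 1 else -1 with htdef
    have hub : ∀ i, ‖u i - (t i : ℂ)‖ ≤ ‖d i‖ := by
      intro i
      have hfac : ‖u i - 1‖ * ‖u i + 1‖ = ‖d i‖ := by
        rw [← norm_mul, ← hu2 i]; ring_nf
      have htri : 2 ≤ ‖u i - 1‖ + ‖u i + 1‖ := by
        have h2 : ((1 : ℂ) - u i) + (u i + 1) = 2 := by ring
        calc (2 : ℝ) = ‖((1 : ℂ) - u i) + (u i + 1)‖ := by rw [h2]; simp
          _ ≤ ‖1 - u i‖ + ‖u i + 1‖ := norm_add_le _ _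
          _ = ‖u i - 1‖ + ‖u i + 1‖ := by rw [norm_sub_rev]
      by_cases hc : ‖u i - 1‖ ≤ ‖u i + 1‖
      · have ht1 : (t i : ℂ) = 1 := by simp [htdef, hc]
        rw [ht1]
        nlinarith [norm_nonneg (u i - 1), norm_nonneg (u i + 1)]
      · have ht1 : (t i : ℂ) = -1 := by simp [htdef, hc]
        rw [ht1]
        have heq2 : u i - (-1 : ℂ) = u i + 1 := by ring
        rw [heq2]
        push_neg at hc
        nlinarith [norm_nonneg (u i - 1), norm_nonneg (u i + 1)]
    have husum : ∑ i, u i = 0 := by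
      have : ∑ i, u i = (∑ i, x i) / r := by
        rw [hudef, Finset.sum_div]
      rw [this, hsum, zero_div]
    -- ∑ t is odd hence nonzero
    have htodd : (∑ i, t i) ≠ 0 := by
      intro hzero
      have hmod : ((∑ i, t i : ℤ) : ZMod 2) = 1 := by
        push_cast
        have ht1 : ∀ i : Fin (2 * n + 1), ((t i : ZMod 2)) = 1 := by
          intro i
          by_cases hc : ‖u i - 1‖ ≤ ‖u i + 1‖
          · simp [htdef, hc]
          · simp only [htdef, hc, if_false]
            decide
        rw [Finset.sum_congr rfl fun i _ => ht1 i, Finset.sum_const, Finset.card_univ,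
          Fintype.card_fin, nsmul_eq_mul]
        push_cast
        have h2 : (2 : ZMod 2) = 0 := by decide
        rw [h2]
        ring
      rw [hzero] at hmod
      simp at hmod
    have hge1 : (1 : ℝ) ≤ ‖((∑ i, t i : ℤ) : ℂ)‖ := by
      rw [Complex.norm_intCast]
      exact_mod_cast Int.one_le_abs htodd
    have hlt1 : ‖((∑ i, t i : ℤ) : ℂ)‖ < 1 := by
      have hcast : ((∑ i, t i : ℤ) : ℂ) = ∑ i, ((t i : ℂ) - u i) := by
        push_cast
        rw [Finset.sum_sub_distrib, husum]
        ring
      rw [hcast]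
      calc ‖∑ i, ((t i : ℂ) - u i)‖
          ≤ ∑ i, ‖(t i : ℂ) - u i‖ := norm_sum_le _ _
        _ ≤ ∑ i, ‖d i‖ := by
            refine Finset.sum_le_sum fun i _ => ?_
            rw [norm_sub_rev]
            exact hub i
        _ ≤ ∑ i, Ki i / K := Finset.sum_le_sum fun i _ => hd i
        _ = (K - 1) / K := by
            have hsumKi : ∑ i, Ki i = K - 1 := by rw [hKdef]; ring
            rw [← Finset.sum_div, hsumKi]
        _ < 1 := by
            rw [div_lt_one hK0]; linarith
    linarith
  refine ⟨hx0, ?_⟩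
  funext i
  have := heq' i
  rw [hx0, zero_mul] at this
  exact pow_eq_zero_iff (n := 2) (by norm_num) |>.mp this
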